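/- Let U = ℤ, and for i ∈ ℤ let L_i = ℤ \ {i}, and for i < j in ℤ let L_{ij} = ℤ \ {i, j}; let C = {L_i : i ∈ ℤ} ∪ {L_{ij} : i, j ∈ ℤ, i < j}. Then the GF dimension of C is infinite (so C cannot be uniformly generated with feedback), yet there exists a generating algorithm that non-uniformly generates in the limit from C. -/

import Mathlib

/-!
STATEMENT 18: Let U = ℤ, L_i = ℤ \ {i} for i ∈ ℤ, L_{ij} = ℤ \ {i, j} for i < j, and
C = {L_i} ∪ {L_{ij}}.  Then the GF dimension of C is infinite (so C cannot be
uniformly generated with feedback), yet there exists a generating algorithm that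
non-uniformly generates in the limit from C.
-/

/-- `x` is an enumeration of the language `K`. -/
def IsEnumerationOf {U : Type} (K : Set U) (x : ℕ → U) : Prop :=
  (∀ t, x t ∈ K) ∧ ∀ w ∈ K, ∃ t, x t = w

/-- The set `S_t` of distinct strings among the first `t` inputs. -/
def seen {U : Type} (x : ℕ → U) (t : ℕ) : Set U := x '' {i | i < t}

/-- The input prefix `(x_1, ..., x_t)` as a list. -/
def inputList {U : Type} (x : ℕ → U) (t : ℕ) : List U :=
  List.ofFn (fun i : Fin t => x i)

/-- A generator strategy in the feedback model: `query h x` is the membership query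
`y_t` issued after receiving input `x_t` with history `h` of completed rounds, and
`out h x y a` is the output `z_t` after the answer `a_t` to the query. -/
structure FGen (U : Type) where
  query : List (U × U × Bool × U) → U → U
  out : List (U × U × Bool × U) → U → U → Bool → U

/-- An adversary strategy in the feedback model: `inp h` is the next input `x_t`,
and `ans h x y` is the yes/no answer `a_t` to the generator's query `y_t`. -/
structure FAdv (U : Type) where
  inp : List (U × U × Bool × U) → U
  ans : List (U × U × Bool × U) → U → U → Bool

/-- The history of the first `t` completed rounds `(x_s, y_s, a_s, z_s)` of the
interaction between `Adv` and `Gen`. -/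
def fRun {U : Type} (Adv : FAdv U) (Gen : FGen U) : ℕ → List (U × U × Bool × U)
  | 0 => []
  | t + 1 =>
      let h := fRun Adv Gen t
      let x := Adv.inp h
      let y := Gen.query h x
      let a := Adv.ans h x y
      h ++ [(x, y, a, Gen.out h x y a)]

/-- The input `x_t` of round `t` (0-indexed) of the transcript T(Adv, Gen). -/
def fX {U : Type} (Adv : FAdv U) (Gen : FGen U) (t : ℕ) : U :=
  Adv.inp (fRun Adv Gen t)

/-- The generator's query `y_t` of round `t`. -/
def fY {U : Type} (Adv : FAdv U) (Gen : FGen U) (t : ℕ) : U :=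
  Gen.query (fRun Adv Gen t) (fX Adv Gen t)

/-- The adversary's answer `a_t` of round `t`. -/
def fA {U : Type} (Adv : FAdv U) (Gen : FGen U) (t : ℕ) : Bool :=
  Adv.ans (fRun Adv Gen t) (fX Adv Gen t) (fY Adv Gen t)

/-- The generator's output `z_t` of round `t`. -/
def fZ {U : Type} (Adv : FAdv U) (Gen : FGen U) (t : ℕ) : U :=
  Gen.out (fRun Adv Gen t) (fX Adv Gen t) (fY Adv Gen t) (fA Adv Gen t)

/-- `S_r`: the set of distinct inputs among the first `r` rounds. -/
def fS {U : Type} (Adv : FAdv U) (Gen : FGen U) (r : ℕ) : Set U :=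
  fX Adv Gen '' {t | t < r}

/-- The adversary strategy `Adv` is consistent with the language `K` (against `Gen`):
the inputs form an enumeration of `K` and every answer is truthful for `K`. -/
def fConsistent {U : Type} (Adv : FAdv U) (Gen : FGen U) (K : Set U) : Prop :=
  (∀ t, fX Adv Gen t ∈ K) ∧ (∀ w ∈ K, ∃ t, fX Adv Gen t = w) ∧
    ∀ t, fA Adv Gen t = true ↔ fY Adv Gen t ∈ K

/-- `C_r(T)`: the languages of `C` consistent with the transcript up to round `r`
(inputs belong to the language and all answers are truthful for it). -/
def fCons {U : Type} (C : Set (Set U)) (Adv : FAdv U) (Gen : FGen U) (r : ℕ) :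
    Set (Set U) :=
  {Lang ∈ C | ∀ t < r, fX Adv Gen t ∈ Lang ∧ (fA Adv Gen t = true ↔ fY Adv Gen t ∈ Lang)}

/-- The effective intersection `E_r(T)`. -/
def fE {U : Type} (C : Set (Set U)) (Adv : FAdv U) (Gen : FGen U) (r : ℕ) : Set U :=
  ⋂₀ fCons C Adv Gen r \ fS Adv Gen r

/-- The GF dimension of `C`: the supremum of all `d ∈ ℕ` such that for every
generator strategy there are `K ∈ C` and an adversary strategy consistent with `K`
whose transcript has a finite round `r ≥ d` with `|S_r| ≥ d` and `E_r(T) = ∅`. -/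
noncomputable def gfDim {U : Type} (C : Set (Set U)) : ℕ∞ :=
  sSup {e : ℕ∞ | ∃ d : ℕ, e = (d : ℕ∞) ∧
    ∀ Gen : FGen U, ∃ K ∈ C, ∃ Adv : FAdv U,
      fConsistent Adv Gen K ∧
      ∃ r : ℕ, d ≤ r ∧ d ≤ (fS Adv Gen r).ncard ∧ fE C Adv Gen r = ∅}

/-- `C` can be uniformly generated with feedback: some generator strategy `Gen` and
bound `t*` are such that against every adversary consistent with any `K ∈ C`, the
output of every round `t` with `|S_t| ≥ t*` lies in `K \ S_t` (here `S_t` counts the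
inputs up to and including round `t`). -/
def UniformGenWithFeedback {U : Type} (C : Set (Set U)) : Prop :=
  ∃ Gen : FGen U, ∃ tstar : ℕ,
    ∀ K ∈ C, ∀ Adv : FAdv U, fConsistent Adv Gen K →
      ∀ t : ℕ, tstar ≤ (fS Adv Gen (t + 1)).ncard →
        fZ Adv Gen t ∈ K \ fS Adv Gen (t + 1)

/-- The collection C = {ℤ \ {i} : i ∈ ℤ} ∪ {ℤ \ {i,j} : i < j}. -/
def Cex : Set (Set ℤ) :=
  (Set.range fun i : ℤ => ({i}ᶜ : Set ℤ)) ∪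
    {Lang | ∃ i j : ℤ, i < j ∧ Lang = ({i, j}ᶜ : Set ℤ)}


/-! ### Auxiliary development -/

section CCEAux

abbrev CCETup := ℤ × ℤ × Bool × ℤ

def lmax (l : List ℕ) : ℕ := l.foldr max 0

lemma le_lmax {a : ℕ} {l : List ℕ} (h : a ∈ l) : a ≤ lmax l := by
  induction l with
  | nil => cases h
  | cons b l ih =>
    rcases List.mem_cons.mp h with rfl | h
    · exact le_max_left _ _
    · exact le_trans (ih h) (le_max_right _ _)

def tb (p : CCETup) : ℕ := max (max p.1.natAbs p.2.1.natAbs) p.2.2.2.natAbs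

def bnd (h : List CCETup) : ℕ := lmax (h.map tb)

def fresh (h : List CCETup) : ℤ := (bnd h : ℤ) + 1

lemma natAbs_fresh (h : List CCETup) : (fresh h).natAbs = bnd h + 1 := by
  unfold fresh; omega

def inputs (h : List CCETup) : List ℤ := h.map (·.1)

lemma abs_le_of_mem_inputs {w : ℤ} {h : List CCETup} (hm : w ∈ inputs h) :
    w.natAbs ≤ bnd h := by
  obtain ⟨p, hp, rfl⟩ := List.mem_map.mp hm
  exact le_trans (le_trans (le_max_left _ _) (le_max_left _ _))
    (le_lmax (List.mem_map_of_mem (f := tb) hp))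

lemma fresh_not_mem_inputs (h : List CCETup) : fresh h ∉ inputs h := by
  intro hm
  have := abs_le_of_mem_inputs hm
  rw [natAbs_fresh] at this
  omega

def intEnum (n : ℕ) : ℤ := Equiv.intEquivNat.symm n

lemma intEnum_surj (w : ℤ) : ∃ n, intEnum n = w :=
  ⟨Equiv.intEquivNat w, Equiv.intEquivNat.symm_apply_apply w⟩

def fb (E : List ℤ) : ℤ := (lmax (E.map Int.natAbs) : ℤ) + 1

lemma fb_not_mem (E : List ℤ) : fb E ∉ E := by
  intro hm
  have h1 : (fb E).natAbs ≤ lmax (E.map Int.natAbs) :=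
    le_lmax (List.mem_map_of_mem (f := Int.natAbs) hm)
  have h2 : (fb E).natAbs = lmax (E.map Int.natAbs) + 1 := by unfold fb; omega
  omega

/-- helper: complements of pairs (possibly degenerate) are in `Cex`. -/
lemma pair_compl_mem_Cex (a b : ℤ) : ({a, b} : Set ℤ)ᶜ ∈ Cex := by
  rcases lt_trichotomy a b with h | h | h
  · exact Or.inr ⟨a, b, h, rfl⟩
  · subst h
    rw [Set.pair_eq_singleton]
    exact Or.inl ⟨a, rfl⟩
  · rw [Set.pair_comm]
    exact Or.inr ⟨b, a, h, rfl⟩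

def advInp (r : ℕ) (exclF : List CCETup → List ℤ) (h : List CCETup) : ℤ :=
  if h.length < r then
    h.getLast?.elim (fresh h) (fun p => if p.2.1 ∈ inputs h then fresh h else p.2.1)
  else
    if intEnum (h.length - r) ∈ exclF (h.take r) then fb (exclF (h.take r))
    else intEnum (h.length - r)

def advAns (r : ℕ) (exclF : List CCETup → List ℤ) (h : List CCETup) (x y : ℤ) : Bool :=
  if h.length + 1 < r then true
  else if h.length + 1 = r then decide (y ∈ inputs h ∨ y = x)
  else decide (y ∉ exclF (h.take r))

def mkAdv (r : ℕ) (exclF : List CCETup → List ℤ) : FAdv ℤ :=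
  ⟨advInp r exclF, advAns r exclF⟩

section Run

variable (Gen : FGen ℤ) (r : ℕ) (exclF : List CCETup → List ℤ)

local notation "A" => mkAdv r exclF

lemma fX_def (t : ℕ) : fX A Gen t = advInp r exclF (fRun A Gen t) := rfl

lemma fA_def (t : ℕ) :
    fA A Gen t = advAns r exclF (fRun A Gen t) (fX A Gen t) (fY A Gen t) := rfl

lemma run_succ (t : ℕ) :
    fRun A Gen (t + 1) =
      fRun A Gen t ++ [(fX A Gen t, fY A Gen t, fA A Gen t, fZ A Gen t)] := rfl

lemma run_length (t : ℕ) : (fRun A Gen t).length = t := by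
  induction t with
  | zero => rfl
  | succ t ih => rw [run_succ]; simp [ih]

lemma run_take {s t : ℕ} (h : s ≤ t) : (fRun A Gen t).take s = fRun A Gen s := by
  induction t with
  | zero =>
      have : s = 0 := Nat.le_zero.mp h
      subst this; rfl
  | succ t ih =>
      rcases Nat.lt_or_ge s (t + 1) with hl | hg
      · have hs : s ≤ t := by omega
        rw [run_succ, List.take_append_of_le_length (by rw [run_length]; omega), ih hs]
      · have : s = t + 1 := le_antisymm h hg
        subst this
        exact List.take_of_length_le (le_of_eq (run_length Gen r exclF _))

lemma run_prefix {s t : ℕ} (h : s ≤ t) : fRun A Gen s <+: fRun A Gen t := by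
  rw [← run_take Gen r exclF h]; exact List.take_prefix _ _

lemma mem_run {s t : ℕ} (h : s < t) :
    (fX A Gen s, fY A Gen s, fA A Gen s, fZ A Gen s) ∈ fRun A Gen t := by
  refine (run_prefix Gen r exclF (show s + 1 ≤ t from h)).subset ?_
  rw [run_succ]; simp

lemma abs_fY_le {s t : ℕ} (h : s < t) : (fY A Gen s).natAbs ≤ bnd (fRun A Gen t) := by
  have hm := mem_run Gen r exclF h
  exact le_trans (le_trans (le_max_right _ _) (le_max_left _ _))
    (le_lmax (List.mem_map_of_mem (f := tb) hm))

lemma run_getLast (t : ℕ) :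
    (fRun A Gen (t + 1)).getLast? =
      some (fX A Gen t, fY A Gen t, fA A Gen t, fZ A Gen t) := by
  rw [run_succ]; simp

lemma inputs_run_succ (t : ℕ) :
    inputs (fRun A Gen (t + 1)) = inputs (fRun A Gen t) ++ [fX A Gen t] := by
  rw [run_succ]; simp [inputs]

lemma mem_inputs_run {w : ℤ} {t : ℕ} :
    w ∈ inputs (fRun A Gen t) ↔ ∃ s < t, fX A Gen s = w := by
  induction t with
  | zero => simp [inputs, fRun]
  | succ t ih =>
      rw [inputs_run_succ]
      simp only [List.mem_append, ih, List.mem_singleton]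
      constructor
      · rintro (⟨s, hs, he⟩ | he)
        · exact ⟨s, by omega, he⟩
        · exact ⟨t, by omega, he.symm⟩
      · rintro ⟨s, hs, he⟩
        rcases Nat.lt_or_ge s t with h1 | h1
        · exact Or.inl ⟨s, h1, he⟩
        · have : s = t := by omega
          subst this; exact Or.inr he.symm

lemma mem_fS_iff {w : ℤ} {t : ℕ} :
    w ∈ fS A Gen t ↔ w ∈ inputs (fRun A Gen t) := by
  rw [mem_inputs_run]
  constructor
  · rintro ⟨s, hs, rfl⟩; exact ⟨s, hs, rfl⟩
  · rintro ⟨s, hs, rfl⟩; exact ⟨s, hs, rfl⟩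

lemma fX_phase1_not_mem {s : ℕ} (hs : s < r) :
    fX A Gen s ∉ inputs (fRun A Gen s) := by
  rw [fX_def, advInp, if_pos (by rw [run_length]; exact hs)]
  rcases hL : (fRun A Gen s).getLast? with _ | p
  · simpa using fresh_not_mem_inputs (fRun A Gen s)
  · simp only [Option.elim_some]
    split
    · exact fresh_not_mem_inputs (fRun A Gen s)
    · assumption

lemma feed {t : ℕ} (h : t + 1 < r) : fY A Gen t ∈ inputs (fRun A Gen (t + 2)) := by
  rw [inputs_run_succ]
  by_cases hc : fY A Gen t ∈ inputs (fRun A Gen (t + 1))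
  · exact List.mem_append.mpr (Or.inl hc)
  · have hx : fX A Gen (t + 1) = fY A Gen t := by
      rw [fX_def, advInp, if_pos (by rw [run_length]; exact h), run_getLast]
      simp only [Option.elim_some]
      exact if_neg hc
    rw [hx]
    exact List.mem_append.mpr (Or.inr (List.mem_singleton.mpr rfl))

lemma fA_pre {t : ℕ} (h : t + 1 < r) : fA A Gen t = true := by
  rw [fA_def, advAns, if_pos (by rw [run_length]; exact h)]

lemma fA_last (hr : 1 ≤ r) :
    fA A Gen (r - 1) = true ↔ fY A Gen (r - 1) ∈ inputs (fRun A Gen r) := by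
  rw [fA_def, advAns, if_neg (by rw [run_length]; omega),
    if_pos (by rw [run_length]; omega)]
  rw [decide_eq_true_iff]
  have hr' : r = (r - 1) + 1 := by omega
  rw [hr', inputs_run_succ]
  simp [or_comm]

lemma fA_phase2 {t : ℕ} (ht : r ≤ t) :
    fA A Gen t = true ↔ fY A Gen t ∉ exclF (fRun A Gen r) := by
  rw [fA_def, advAns, if_neg (by rw [run_length]; omega),
    if_neg (by rw [run_length]; omega), run_take Gen r exclF ht]
  exact decide_eq_true_iff

lemma fX_phase2 (n : ℕ) :
    fX A Gen (r + n) =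
      if intEnum n ∈ exclF (fRun A Gen r) then fb (exclF (fRun A Gen r))
      else intEnum n := by
  rw [fX_def, advInp, if_neg (by rw [run_length]; omega),
    run_take Gen r exclF (by omega), run_length]
  have hn : r + n - r = n := by omega
  rw [hn]

lemma fX_phase2_not_mem (n : ℕ) : fX A Gen (r + n) ∉ exclF (fRun A Gen r) := by
  rw [fX_phase2]
  split
  · exact fb_not_mem _
  · assumption

lemma fX_surj {w : ℤ} (hw : w ∉ exclF (fRun A Gen r)) : ∃ t, fX A Gen t = w := by
  obtain ⟨n, hn⟩ := intEnum_surj w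
  refine ⟨r + n, ?_⟩
  rw [fX_phase2, hn, if_neg hw]

lemma fX_mem_inputs_run {s : ℕ} (hs : s < r) :
    fX A Gen s ∈ inputs (fRun A Gen r) :=
  (mem_inputs_run Gen r exclF).mpr ⟨s, hs, rfl⟩

lemma ncard_fS : (fS A Gen r).ncard = r := by
  have hinj : Set.InjOn (fX A Gen) {t | t < r} := by
    intro s hs u hu he
    rcases lt_trichotomy s u with h | h | h
    · exact absurd ((mem_inputs_run Gen r exclF).mpr ⟨s, h, he⟩)
        (fX_phase1_not_mem Gen r exclF hu)
    · exact h
    · exact absurd ((mem_inputs_run Gen r exclF).mpr ⟨u, h, he.symm⟩)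
        (fX_phase1_not_mem Gen r exclF hs)
  rw [fS, Set.ncard_image_of_injOn hinj]
  show (Set.Iio r).ncard = r
  simp [Set.ncard_eq_toFinset_card']

lemma generic_consistent (hr : 1 ≤ r)
    (H1 : ∀ w ∈ inputs (fRun A Gen r), w ∉ exclF (fRun A Gen r))
    (H2 : fA A Gen (r - 1) = true ↔ fY A Gen (r - 1) ∉ exclF (fRun A Gen r)) :
    fConsistent A Gen {w : ℤ | w ∉ exclF (fRun A Gen r)} := by
  refine ⟨fun t => ?_, fun w hw => fX_surj Gen r exclF hw, fun t => ?_⟩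
  · rcases Nat.lt_or_ge t r with ht | ht
    · exact H1 _ (fX_mem_inputs_run Gen r exclF ht)
    · obtain ⟨n, rfl⟩ : ∃ n, t = r + n := ⟨t - r, by omega⟩
      exact fX_phase2_not_mem Gen r exclF n
  · rcases Nat.lt_or_ge t r with ht | ht
    · rcases Nat.lt_or_ge (t + 1) r with ht1 | ht1
      · have hA := fA_pre Gen r exclF ht1
        have hY : fY A Gen t ∈ inputs (fRun A Gen r) := by
          obtain ⟨s, hs, he⟩ := (mem_inputs_run Gen r exclF).mp
            (feed Gen r exclF ht1)
          exact (mem_inputs_run Gen r exclF).mpr ⟨s, by omega, he⟩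
        simp only [hA, Set.mem_setOf_eq, true_iff]
        exact H1 _ hY
      · have : t = r - 1 := by omega
        subst this
        exact H2
    · exact fA_phase2 Gen r exclF ht

lemma run_getLast' {t : ℕ} (ht : 1 ≤ t) :
    (fRun A Gen t).getLast? =
      some (fX A Gen (t - 1), fY A Gen (t - 1), fA A Gen (t - 1), fZ A Gen (t - 1)) := by
  obtain ⟨u, rfl⟩ : ∃ u, t = u + 1 := ⟨t - 1, by omega⟩
  simp only [Nat.add_sub_cancel]
  exact run_getLast Gen r exclF u

end Run

def excl1 (h : List CCETup) : List ℤ :=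
  h.getLast?.elim [0] (fun p => if p.2.2.1 then [fresh h] else [p.2.1])

section Part1

variable (Gen : FGen ℤ) (r : ℕ)

local notation "A1" => mkAdv r excl1

noncomputable def w1 : ℤ :=
  if fA A1 Gen (r - 1) = true then fresh (fRun A1 Gen r) else fY A1 Gen (r - 1)

lemma excl1_run (hr : 1 ≤ r) : excl1 (fRun A1 Gen r) = [w1 Gen r] := by
  rw [excl1, run_getLast' Gen r excl1 hr, Option.elim_some]
  unfold w1
  cases hA : fA A1 Gen (r - 1) <;> simp [hA]

lemma w1_not_mem (hr : 1 ≤ r) : w1 Gen r ∉ inputs (fRun A1 Gen r) := by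
  unfold w1
  split
  · exact fresh_not_mem_inputs _
  · next h =>
      intro hm
      exact h ((fA_last Gen r excl1 hr).mpr hm)

lemma part1_H1 (hr : 1 ≤ r) : ∀ w ∈ inputs (fRun A1 Gen r), w ∉ excl1 (fRun A1 Gen r) := by
  intro w hw
  rw [excl1_run Gen r hr]
  intro hmem
  rw [List.mem_singleton] at hmem
  exact w1_not_mem Gen r hr (hmem ▸ hw)

lemma part1_H2 (hr : 1 ≤ r) :
    fA A1 Gen (r - 1) = true ↔ fY A1 Gen (r - 1) ∉ excl1 (fRun A1 Gen r) := by
  rw [excl1_run Gen r hr]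
  constructor
  · intro hA hmem
    rw [List.mem_singleton] at hmem
    rw [w1, if_pos hA] at hmem
    have h1 := abs_fY_le Gen r excl1 (show r - 1 < r by omega)
    rw [hmem, natAbs_fresh] at h1
    omega
  · intro h
    by_contra hA
    have hA' : fA A1 Gen (r - 1) = false := by
      cases hF : fA A1 Gen (r - 1)
      · rfl
      · exact absurd hF hA
    apply h
    rw [List.mem_singleton, w1, if_neg (by rw [hA']; simp)]

lemma part1_E (hr : 1 ≤ r) : fE Cex A1 Gen r = ∅ := by
  rw [fE, Set.diff_eq_empty]
  intro z hz
  by_contra hzS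
  set L : Set ℤ := ({w1 Gen r, z} : Set ℤ)ᶜ with hL
  have hzX : ∀ t < r, fX A1 Gen t ≠ z := by
    intro t ht he
    exact hzS ⟨t, ht, he⟩
  have hLC : L ∈ fCons Cex A1 Gen r := by
    refine ⟨pair_compl_mem_Cex _ _, fun t ht => ⟨?_, ?_⟩⟩
    · have hXmem := fX_mem_inputs_run Gen r excl1 ht
      have h1 : fX A1 Gen t ≠ w1 Gen r := fun e => w1_not_mem Gen r hr (e ▸ hXmem)
      simp only [hL, Set.mem_compl_iff, Set.mem_insert_iff, Set.mem_singleton_iff]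
      push_neg
      exact ⟨h1, hzX t ht⟩
    · cases hA : fA A1 Gen t
      · have ht1 : t = r - 1 := by
          by_contra hne
          have h2 : t + 1 < r := by omega
          rw [fA_pre Gen r excl1 h2] at hA
          cases hA
        subst ht1
        have hw : w1 Gen r = fY A1 Gen (r - 1) := by
          rw [w1, if_neg (by rw [hA]; simp)]
        simp only [Bool.false_eq_true, false_iff, hL, Set.mem_compl_iff, not_not]
        exact Or.inl hw.symm
      · have hY : fY A1 Gen t ∈ inputs (fRun A1 Gen r) := by
          rcases Nat.lt_or_ge (t + 1) r with h2 | h2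
          · obtain ⟨s, hs, he⟩ := (mem_inputs_run Gen r excl1).mp (feed Gen r excl1 h2)
            exact (mem_inputs_run Gen r excl1).mpr ⟨s, by omega, he⟩
          · have h3 : t = r - 1 := by omega
            subst h3
            exact (fA_last Gen r excl1 hr).mp hA
        have h1 : fY A1 Gen t ≠ w1 Gen r := fun e => w1_not_mem Gen r hr (e ▸ hY)
        have h2 : fY A1 Gen t ≠ z := by
          intro he
          obtain ⟨s, hs, he2⟩ := (mem_inputs_run Gen r excl1).mp hY
          exact hzS ⟨s, hs, by rw [he2, he]⟩
        simp only [hA, true_iff, hL, Set.mem_compl_iff, Set.mem_insert_iff,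
          Set.mem_singleton_iff]
        push_neg
        exact ⟨h1, h2⟩
  have hzL : z ∈ L := Set.mem_sInter.mp hz L hLC
  exact hzL (Or.inr rfl)

lemma part1_main (d : ℕ) (Gen' : FGen ℤ) :
    ∃ K ∈ Cex, ∃ Adv : FAdv ℤ, fConsistent Adv Gen' K ∧
      ∃ r : ℕ, d ≤ r ∧ d ≤ (fS Adv Gen' r).ncard ∧ fE Cex Adv Gen' r = ∅ := by
  set r' := max d 1 with hr'
  have hr : 1 ≤ r' := le_max_right d 1
  have hc := generic_consistent Gen' r' excl1 hr (part1_H1 Gen' r' hr) (part1_H2 Gen' r' hr)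
  have hset : ({w1 Gen' r', w1 Gen' r'} : Set ℤ)ᶜ
      = {w : ℤ | w ∉ excl1 (fRun (mkAdv r' excl1) Gen' r')} := by
    rw [excl1_run Gen' r' hr]
    ext w
    simp
  refine ⟨({w1 Gen' r', w1 Gen' r'} : Set ℤ)ᶜ, pair_compl_mem_Cex _ _, mkAdv r' excl1,
    by rw [hset]; exact hc, r', le_max_left d 1, ?_, part1_E Gen' r' hr⟩
  rw [ncard_fS]
  exact le_max_left d 1

end Part1

def excl2 (h : List CCETup) : List ℤ :=
  h.getLast?.elim [0] (fun p =>
    if p.2.2.1 then (if p.2.2.2 ∈ inputs h then [fresh h] else [p.2.2.2])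
    else (if p.2.2.2 ∈ inputs h then [p.2.1] else [p.2.1, p.2.2.2]))

section Part2

variable (Gen : FGen ℤ) (r : ℕ)

local notation "A2" => mkAdv r excl2

lemma excl2_run (hr : 1 ≤ r) : excl2 (fRun A2 Gen r) =
    (if fA A2 Gen (r - 1) = true then
      (if fZ A2 Gen (r - 1) ∈ inputs (fRun A2 Gen r) then [fresh (fRun A2 Gen r)]
       else [fZ A2 Gen (r - 1)])
     else
      (if fZ A2 Gen (r - 1) ∈ inputs (fRun A2 Gen r) then [fY A2 Gen (r - 1)]
       else [fY A2 Gen (r - 1), fZ A2 Gen (r - 1)])) := by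
  rw [excl2, run_getLast' Gen r excl2 hr, Option.elim_some]

lemma part2_H1 (hr : 1 ≤ r) :
    ∀ w ∈ inputs (fRun A2 Gen r), w ∉ excl2 (fRun A2 Gen r) := by
  intro w hw hmem
  rw [excl2_run Gen r hr] at hmem
  have hwa := abs_le_of_mem_inputs hw
  split_ifs at hmem with h1 h2 h2
  · rw [List.mem_singleton] at hmem
    rw [hmem, natAbs_fresh] at hwa
    omega
  · rw [List.mem_singleton] at hmem
    exact h2 (hmem ▸ hw)
  · rw [List.mem_singleton] at hmem
    exact h1 ((fA_last Gen r excl2 hr).mpr (hmem ▸ hw))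
  · rcases List.mem_cons.mp hmem with he | he
    · exact h1 ((fA_last Gen r excl2 hr).mpr (he ▸ hw))
    · rw [List.mem_singleton] at he
      exact h2 (he ▸ hw)

lemma part2_H2 (hr : 1 ≤ r) :
    fA A2 Gen (r - 1) = true ↔ fY A2 Gen (r - 1) ∉ excl2 (fRun A2 Gen r) := by
  constructor
  · intro hA hmem
    rw [excl2_run Gen r hr, if_pos hA] at hmem
    have hYI : fY A2 Gen (r - 1) ∈ inputs (fRun A2 Gen r) :=
      (fA_last Gen r excl2 hr).mp hA
    split_ifs at hmem with h1
    · rw [List.mem_singleton] at hmem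
      have := abs_le_of_mem_inputs hYI
      rw [hmem, natAbs_fresh] at this
      omega
    · rw [List.mem_singleton] at hmem
      exact h1 (hmem ▸ hYI)
  · intro h
    by_contra hA
    have hA' : fA A2 Gen (r - 1) = false := by
      cases hF : fA A2 Gen (r - 1)
      · rfl
      · exact absurd hF hA
    apply h
    rw [excl2_run Gen r hr, if_neg (by rw [hA']; simp)]
    split_ifs with h1
    all_goals simp

lemma setOf_not_mem_single (a : ℤ) : {w : ℤ | w ∉ [a]} = ({a, a} : Set ℤ)ᶜ := by
  ext w; simp

lemma setOf_not_mem_pair (a b : ℤ) : {w : ℤ | w ∉ [a, b]} = ({a, b} : Set ℤ)ᶜ := by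
  ext w; simp

lemma part2_main : ¬ UniformGenWithFeedback Cex := by
  rintro ⟨Gen, tstar, hU⟩
  set r := max tstar 1 with hrdef
  have hr : 1 ≤ r := le_max_right tstar 1
  have hc := generic_consistent Gen r excl2 hr (part2_H1 Gen r hr) (part2_H2 Gen r hr)
  set K := {w : ℤ | w ∉ excl2 (fRun (mkAdv r excl2) Gen r)} with hKdef
  have hK : K ∈ Cex := by
    rw [hKdef, excl2_run Gen r hr]
    split_ifs
    · rw [setOf_not_mem_single]; exact pair_compl_mem_Cex _ _
    · rw [setOf_not_mem_single]; exact pair_compl_mem_Cex _ _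
    · rw [setOf_not_mem_single]; exact pair_compl_mem_Cex _ _
    · rw [setOf_not_mem_pair]; exact pair_compl_mem_Cex _ _
  have hr1 : (r - 1) + 1 = r := by omega
  have hcard : tstar ≤ (fS (mkAdv r excl2) Gen ((r - 1) + 1)).ncard := by
    rw [hr1, ncard_fS]
    exact le_max_left tstar 1
  have hout := hU K hK (mkAdv r excl2) hc (r - 1) hcard
  rw [hr1] at hout
  obtain ⟨hzK, hzS⟩ := hout
  have hzI : fZ (mkAdv r excl2) Gen (r - 1) ∉ inputs (fRun (mkAdv r excl2) Gen r) :=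
    fun hm => hzS ((mem_fS_iff Gen r excl2).mpr hm)
  apply hzK
  show fZ (mkAdv r excl2) Gen (r - 1) ∈ excl2 (fRun (mkAdv r excl2) Gen r)
  rw [excl2_run Gen r hr]
  simp only [if_neg hzI]
  split_ifs with h1
  all_goals simp

end Part2

/-! ### Part 3: non-uniform generation -/

def genAlg (l : List ℤ) : ℤ := (lmax (l.map Int.natAbs) : ℤ) + l.length + 1

lemma genAlg_eq (l : List ℤ) :
    genAlg l = ((lmax (l.map Int.natAbs) + l.length + 1 : ℕ) : ℤ) := by
  unfold genAlg; push_cast; ring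

lemma genAlg_natAbs (l : List ℤ) :
    (genAlg l).natAbs = lmax (l.map Int.natAbs) + l.length + 1 := by
  rw [genAlg_eq]; exact Int.natAbs_natCast _

lemma seen_abs_le {x : ℕ → ℤ} {t : ℕ} {w : ℤ} (hw : w ∈ seen x t) :
    w.natAbs ≤ lmax ((inputList x t).map Int.natAbs) := by
  obtain ⟨s, hs, rfl⟩ := hw
  refine le_lmax (List.mem_map_of_mem (f := Int.natAbs) ?_)
  exact List.mem_ofFn.mpr ⟨⟨s, hs⟩, rfl⟩

lemma part3_main :
    ∃ A : List ℤ → ℤ, ∀ K ∈ Cex, ∃ tstar : ℕ,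
      ∀ x : ℕ → ℤ, IsEnumerationOf K x →
        ∀ t : ℕ, tstar ≤ (seen x t).ncard →
          A (inputList x t) ∈ K \ seen x t := by
  refine ⟨genAlg, ?_⟩
  intro K hK
  have hKform : ∃ a b : ℤ, K = ({a, b} : Set ℤ)ᶜ := by
    rcases hK with ⟨i, hi⟩ | ⟨i, j, _, rfl⟩
    · refine ⟨i, i, ?_⟩
      rw [Set.pair_eq_singleton]
      exact hi.symm
    · exact ⟨i, j, rfl⟩
  obtain ⟨a, b, rfl⟩ := hKform
  refine ⟨max a.natAbs b.natAbs + 1, ?_⟩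
  intro x _ t hcard
  have hcard' : (seen x t).ncard ≤ t := by
    have h1 := Set.ncard_image_le (f := x) (s := {i | i < t}) (Set.finite_Iio t)
    have h2 : ({i | i < t} : Set ℕ).ncard = t := by
      show (Set.Iio t).ncard = t
      simp [Set.ncard_eq_toFinset_card']
    rw [seen]
    omega
  have ht : max a.natAbs b.natAbs + 1 ≤ t := le_trans hcard hcard'
  have hlen : (inputList x t).length = t := by simp [inputList]
  have habs : (genAlg (inputList x t)).natAbs
      = lmax ((inputList x t).map Int.natAbs) + t + 1 := by
    rw [genAlg_natAbs, hlen]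
  constructor
  · intro hmem
    rcases hmem with he | he
    · rw [he] at habs; omega
    · rw [Set.mem_singleton_iff] at he
      rw [he] at habs
      omega
  · intro hmem
    have := seen_abs_le hmem
    omega

end CCEAux

theorem cofinite_collection_example :
    gfDim Cex = ⊤ ∧ ¬ UniformGenWithFeedback Cex ∧
    ∃ A : List ℤ → ℤ, ∀ K ∈ Cex, ∃ tstar : ℕ,
      ∀ x : ℕ → ℤ, IsEnumerationOf K x →
        ∀ t : ℕ, tstar ≤ (seen x t).ncard →
          A (inputList x t) ∈ K \ seen x t := by
  refine ⟨?_, part2_main, part3_main⟩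
  rw [gfDim]
  apply sSup_eq_top.mpr
  intro b hb
  obtain ⟨n, rfl⟩ := WithTop.ne_top_iff_exists.mp hb.ne
  refine ⟨((n + 1 : ℕ) : ℕ∞), ⟨n + 1, rfl, fun Gen => part1_main (n + 1) Gen⟩, ?_⟩
  exact Nat.cast_lt.mpr (Nat.lt_succ_self n)
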